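/- (The ENN within a cell lies on the convex hull.) Let x_l < x_r and y_b < y_t be reals such that every q_i satisfies x(q_i) ≤ x_l or x(q_i) ≥ x_r, and also y(q_i) ≤ y_b or y(q_i) ≥ y_t, and let C = [x_l, x_r] × [y_b, y_t]. Let F be a finite nonempty set of points contained in C. Then there exists a point p ∈ F such that Ed(p) ≤ Ed(p') for all p' ∈ F and p is an extreme point of the convex hull of F. -/

import Mathlib

open Finset

/-- Within a cell `C = [x_l, x_r] × [y_b, y_t]` of the arrangement, the
expected nearest neighbor among a finite nonempty set `F ⊆ C` can be chosen to be an
extreme point of the convex hull of `F`. -/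
theorem enn_in_cell_on_convex_hull
    (m : ℕ) (hm : 1 ≤ m) (q : Fin m → ℝ × ℝ) (w : Fin m → ℝ) (hw : ∀ i, 0 ≤ w i)
    (xl xr yb yt : ℝ) (hx : xl < xr) (hy : yb < yt)
    (hqx : ∀ i, (q i).1 ≤ xl ∨ xr ≤ (q i).1)
    (hqy : ∀ i, (q i).2 ≤ yb ∨ yt ≤ (q i).2)
    (Ed : ℝ × ℝ → ℝ)
    (hEd : ∀ p, Ed p = ∑ i, w i * (|p.1 - (q i).1| + |p.2 - (q i).2|))
    (F : Finset (ℝ × ℝ)) (hne : F.Nonempty)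
    (hF : ∀ p ∈ F, (xl ≤ p.1 ∧ p.1 ≤ xr) ∧ (yb ≤ p.2 ∧ p.2 ≤ yt)) :
    ∃ p ∈ F, (∀ p' ∈ F, Ed p ≤ Ed p') ∧
      p ∈ Set.extremePoints ℝ (convexHull ℝ (↑F : Set (ℝ × ℝ))) := by
  classical
  -- sign functions
  set sx : Fin m → ℝ := fun i => if (q i).1 ≤ xl then 1 else -1 with hsx
  set sy : Fin m → ℝ := fun i => if (q i).2 ≤ yb then 1 else -1 with hsy
  set a : ℝ := ∑ i, w i * sx i with ha
  set b : ℝ := ∑ i, w i * sy i with hb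
  set c : ℝ := ∑ i, w i * (sx i * (q i).1 + sy i * (q i).2) with hc
  -- on the cell, Ed is affine
  have key : ∀ p : ℝ × ℝ, (xl ≤ p.1 ∧ p.1 ≤ xr) → (yb ≤ p.2 ∧ p.2 ≤ yt) →
      Ed p = a * p.1 + b * p.2 - c := by
    intro p hpx hpy
    rw [hEd, ha, hb, hc, Finset.sum_mul, Finset.sum_mul, ← Finset.sum_add_distrib,
      ← Finset.sum_sub_distrib]
    refine Finset.sum_congr rfl fun i _ => ?_
    have hxi : |p.1 - (q i).1| = sx i * (p.1 - (q i).1) := by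
      rcases hqx i with h | h
      · rw [hsx]; simp only [if_pos h]; rw [abs_of_nonneg (by linarith)]; ring
      · rw [hsx]; simp only [if_neg (by linarith : ¬ (q i).1 ≤ xl)]
        rw [abs_of_nonpos (by linarith)]; ring
    have hyi : |p.2 - (q i).2| = sy i * (p.2 - (q i).2) := by
      rcases hqy i with h | h
      · rw [hsy]; simp only [if_pos h]; rw [abs_of_nonneg (by linarith)]; ring
      · rw [hsy]; simp only [if_neg (by linarith : ¬ (q i).2 ≤ yb)]
        rw [abs_of_nonpos (by linarith)]; ring
    rw [hxi, hyi]; ring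
  -- the hull is inside the cell
  set K : Set (ℝ × ℝ) := convexHull ℝ (↑F : Set (ℝ × ℝ)) with hK
  have hFcell : (↑F : Set (ℝ × ℝ)) ⊆ Set.Icc (xl, yb) (xr, yt) := by
    intro p hp
    obtain ⟨⟨h1, h2⟩, h3, h4⟩ := hF p hp
    exact ⟨⟨h1, h3⟩, ⟨h2, h4⟩⟩
  have hKcell : K ⊆ Set.Icc (xl, yb) (xr, yt) :=
    convexHull_min hFcell (convex_Icc _ _)
  -- linear functional to maximize
  set l : (ℝ × ℝ) →L[ℝ] ℝ :=
    (-a) • (ContinuousLinearMap.fst ℝ ℝ ℝ) + (-b) • (ContinuousLinearMap.snd ℝ ℝ ℝ) with hl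
  have hlval : ∀ p : ℝ × ℝ, l p = -a * p.1 + -b * p.2 := by
    intro p; simp [hl]
  have hKcomp : IsCompact K := F.finite_toSet.isCompact_convexHull ℝ
  have hKne : K.Nonempty := hne.to_set.mono (subset_convexHull ℝ _)
  obtain ⟨z, hzK, hz⟩ := hKcomp.exists_isMaxOn hKne l.continuous.continuousOn
  have hExp : IsExposed ℝ K {y ∈ K | ∀ x ∈ K, l x ≤ l y} := fun _ => ⟨l, rfl⟩
  have hBne : {y ∈ K | ∀ x ∈ K, l x ≤ l y}.Nonempty := ⟨z, hzK, hz⟩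
  obtain ⟨p, hp⟩ := (hExp.isCompact hKcomp).extremePoints_nonempty hBne
  have hpext : p ∈ Set.extremePoints ℝ K :=
    hExp.isExtreme.extremePoints_subset_extremePoints hp
  have hpF : p ∈ F := extremePoints_convexHull_subset hpext
  refine ⟨p, hpF, fun p' hp' => ?_, hpext⟩
  have hpmax : l p' ≤ l p := hp.1.2 p' (subset_convexHull ℝ _ hp')
  have hEdp := key p (hF p hpF).1 (hF p hpF).2
  have hEdp' := key p' (hF p' hp').1 (hF p' hp').2
  rw [hlval, hlval] at hpmax
  linarith
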